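/- The matrix X₁ is invertible and every eigenvalue λ ∈ ℂ of W₁ = X₁⁻¹Y₁ satisfies Re λ > 0. -/

import Mathlib

/-- The `(N-1)×(N-1)` tridiagonal complex matrix with 1-indexed subdiagonal entries
`sub_{i+1}` (at position `(i+1, i)`), diagonal entries `dia_i` and superdiagonal
entries `sup_i` (at position `(i, i+1)`), built from real data. -/
def triMatC (n : ℕ) (sub dia sup : ℕ → ℝ) : Matrix (Fin n) (Fin n) ℂ :=
  Matrix.of fun i j =>
    if i.val = j.val then (dia (i.val + 1) : ℂ)
    else if i.val + 1 = j.val then (sup (i.val + 1) : ℂ)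
    else if j.val + 1 = i.val then (sub (i.val + 1) : ℂ)
    else 0

/-- `μ` is an eigenvalue of the square complex matrix `M` if `M v = μ v` for some
nonzero vector `v`. -/
def IsEig {n : ℕ} (M : Matrix (Fin n) (Fin n) ℂ) (μ : ℂ) : Prop :=
  ∃ v : Fin n → ℂ, v ≠ 0 ∧ M.mulVec v = μ • v

/-- `c₁ = (2 + δz)/(24 δv)`. -/
noncomputable def cc1 (δv δz : ℝ) : ℝ := (2 + δz) / (24 * δv)

/-- `c₂ = 5/(6 δv)`. -/
noncomputable def cc2 (δv : ℝ) : ℝ := 5 / (6 * δv)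

/-- `c₃ = (2 - δz)/(24 δv)`. -/
noncomputable def cc3 (δv δz : ℝ) : ℝ := (2 - δz) / (24 * δv)

/-- `y₁ = -c/(2δz) - (c + c δz²/12)/δz²`. -/
noncomputable def yy1 (c δz : ℝ) : ℝ := -c / (2 * δz) - (c + c * δz ^ 2 / 12) / δz ^ 2

/-- `y₂ = 2 (c + c δz²/12)/δz²`. -/
noncomputable def yy2 (c δz : ℝ) : ℝ := 2 * (c + c * δz ^ 2 / 12) / δz ^ 2

/-- `y₃ = c/(2δz) - (c + c δz²/12)/δz²`. -/
noncomputable def yy3 (c δz : ℝ) : ℝ := c / (2 * δz) - (c + c * δz ^ 2 / 12) / δz ^ 2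

/-- The `(N-1)×(N-1)` tridiagonal Toeplitz matrix `X₁` with subdiagonal `c₁`,
diagonal `c₂` and superdiagonal `c₃`. -/
noncomputable def X1mat (δv δz : ℝ) (N : ℕ) : Matrix (Fin (N - 1)) (Fin (N - 1)) ℂ :=
  triMatC (N - 1) (fun _ => cc1 δv δz) (fun _ => cc2 δv) (fun _ => cc3 δv δz)

/-- The `(N-1)×(N-1)` tridiagonal Toeplitz matrix `Y₁` with subdiagonal `y₁`,
diagonal `y₂` and superdiagonal `y₃`. -/
noncomputable def Y1mat (c δz : ℝ) (N : ℕ) : Matrix (Fin (N - 1)) (Fin (N - 1)) ℂ :=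
  triMatC (N - 1) (fun _ => yy1 c δz) (fun _ => yy2 c δz) (fun _ => yy3 c δz)

open Matrix Finset Complex

noncomputable def Vext (m : ℕ) (v : Fin m → ℂ) (k : ℕ) : ℂ :=
  if h : k < m then v ⟨k, h⟩ else 0

lemma Vext_top (m : ℕ) (v : Fin m → ℂ) {k : ℕ} (h : m ≤ k) : Vext m v k = 0 := by
  simp [Vext, Nat.not_lt.2 h]

lemma tri_row (m : ℕ) (a b d : ℝ) (v : Fin m → ℂ) (i : Fin m) :
    (∑ j, triMatC m (fun _ => a) (fun _ => b) (fun _ => d) i j * v j)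
      = (b : ℂ) * v i + (d : ℂ) * Vext m v (i.val + 1)
        + (a : ℂ) * (if i.val = 0 then 0 else Vext m v (i.val - 1)) := by
  have key : ∀ j : Fin m, triMatC m (fun _ => a) (fun _ => b) (fun _ => d) i j * v j
      = (if i = j then (b : ℂ) * v j else 0)
        + (if i.val + 1 = j.val then (d : ℂ) * v j else 0)
        + (if j.val + 1 = i.val then (a : ℂ) * v j else 0) := by
    intro j
    simp only [triMatC, Matrix.of_apply]
    by_cases h1 : (i : ℕ) = j
    · have : i = j := Fin.ext h1
      subst this
      simp [h1]
    · have hij : ¬ i = j := fun h => h1 (by rw [h])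
      by_cases h2 : (i : ℕ) + 1 = j
      · have h3 : ¬ ((j : ℕ) + 1 = i) := by omega
        simp [h1, h2, h3, hij]
      · by_cases h3 : (j : ℕ) + 1 = i
        · simp [h1, h2, h3, hij]
        · simp [h1, h2, h3, hij]
  rw [Finset.sum_congr rfl (fun j _ => key j)]
  rw [Finset.sum_add_distrib, Finset.sum_add_distrib]
  congr 1
  congr 1
  · simp
  · by_cases h : i.val + 1 < m
    · rw [Finset.sum_eq_single (⟨i.val + 1, h⟩ : Fin m)]
      · simp [Vext, h]
      · intro j _ hj
        rw [if_neg]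
        intro hc; exact hj (Fin.ext hc.symm)
      · simp
    · rw [Finset.sum_eq_zero, Vext_top m v (by omega)]
      · ring
      · intro j _
        rw [if_neg]
        intro hc; omega
  · by_cases h : 0 < i.val
    · rw [Finset.sum_eq_single (⟨i.val - 1, by omega⟩ : Fin m)]
      · rw [if_pos (by simp; omega), if_neg (by omega)]
        simp only [Vext]
        rw [dif_pos (by omega : i.val - 1 < m)]
      · intro j _ hj
        rw [if_neg]
        intro hc
        exact hj (Fin.ext (by simpa using by omega : (j:ℕ) = i.val - 1))
      · simp
    · rw [Finset.sum_eq_zero, if_pos (by omega)]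
      · ring
      · intro j _
        rw [if_neg]
        omega

noncomputable def Ssum (m : ℕ) (v : Fin m → ℂ) : ℂ :=
  ∑ i ∈ Finset.range m, (starRingEnd ℂ) (Vext m v i) * Vext m v (i + 1)

noncomputable def Nsum (m : ℕ) (v : Fin m → ℂ) : ℝ :=
  ∑ i ∈ Finset.range m, Complex.normSq (Vext m v i)

lemma tri_quad (m : ℕ) (a b d : ℝ) (v : Fin m → ℂ) :
    star v ⬝ᵥ (triMatC m (fun _ => a) (fun _ => b) (fun _ => d)).mulVec v
      = (b : ℂ) * (Nsum m v : ℝ) + (d : ℂ) * Ssum m v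
        + (a : ℂ) * (starRingEnd ℂ) (Ssum m v) := by
  have hv : ∀ i : Fin m, v i = Vext m v i.val := by
    intro i; simp [Vext, i.isLt]
  unfold dotProduct Matrix.mulVec
  simp only [Pi.star_apply]
  calc ∑ i : Fin m, star (v i) * ∑ j, triMatC m (fun _ => a) (fun _ => b) (fun _ => d) i j * v j
      = ∑ i : Fin m, ((b:ℂ) * ((starRingEnd ℂ) (Vext m v i.val) * Vext m v i.val)
          + (d:ℂ) * ((starRingEnd ℂ) (Vext m v i.val) * Vext m v (i.val + 1))
          + (a:ℂ) * ((starRingEnd ℂ) (Vext m v i.val) *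
              (if i.val = 0 then 0 else Vext m v (i.val - 1)))) := by
        refine Finset.sum_congr rfl fun i _ => ?_
        rw [tri_row, hv i]
        push_cast
        ring_nf
        rw [RCLike.star_def]
        ring
    _ = (b:ℂ) * (∑ i ∈ Finset.range m, (starRingEnd ℂ) (Vext m v i) * Vext m v i)
          + (d:ℂ) * Ssum m v
          + (a:ℂ) * (∑ i ∈ Finset.range m, (starRingEnd ℂ) (Vext m v i) *
              (if i = 0 then 0 else Vext m v (i - 1))) := by
        rw [Finset.sum_add_distrib, Finset.sum_add_distrib, ← Finset.mul_sum, ← Finset.mul_sum,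
          ← Finset.mul_sum]
        rw [Fin.sum_univ_eq_sum_range (fun k => (starRingEnd ℂ) (Vext m v k) * Vext m v k),
          Fin.sum_univ_eq_sum_range (fun k => (starRingEnd ℂ) (Vext m v k) * Vext m v (k+1)),
          Fin.sum_univ_eq_sum_range (fun k => (starRingEnd ℂ) (Vext m v k) *
            (if k = 0 then 0 else Vext m v (k - 1)))]
        rfl
    _ = (b : ℂ) * (Nsum m v : ℝ) + (d : ℂ) * Ssum m v
        + (a : ℂ) * (starRingEnd ℂ) (Ssum m v) := by
        congr 2
        · congr 1
          rw [Nsum]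
          push_cast
          refine Finset.sum_congr rfl fun i _ => ?_
          rw [mul_comm, Complex.mul_conj]
        · congr 1
          rw [Ssum, map_sum]
          cases m with
          | zero => simp
          | succ t =>
            rw [Finset.sum_range_succ' (fun i => (starRingEnd ℂ) (Vext (t+1) v i) *
              (if i = 0 then 0 else Vext (t+1) v (i - 1))) t]
            rw [Finset.sum_range_succ (fun i => (starRingEnd ℂ)
              ((starRingEnd ℂ) (Vext (t+1) v i) * Vext (t+1) v (i+1))) t]
            rw [Vext_top (t+1) v (le_refl (t+1))]
            simp only [if_pos rfl, if_true, _root_.map_mul, map_zero, mul_zero, add_zero, Complex.conj_conj,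
              Nat.succ_ne_zero, if_false, Nat.add_sub_cancel]
            refine Finset.sum_congr rfl fun i _ => ?_
            ring

lemma Nsum_nonneg (m : ℕ) (v : Fin m → ℂ) : 0 ≤ Nsum m v :=
  Finset.sum_nonneg fun i _ => Complex.normSq_nonneg _

lemma Nsum_pos (m : ℕ) (v : Fin m → ℂ) (hv : v ≠ 0) : 0 < Nsum m v := by
  obtain ⟨i, hi⟩ : ∃ i, v i ≠ 0 := by
    by_contra h
    push_neg at h
    exact hv (funext h)
  refine Finset.sum_pos' (fun j _ => Complex.normSq_nonneg _) ⟨i.val, Finset.mem_range.2 i.isLt, ?_⟩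
  have : Vext m v i.val = v i := by simp [Vext, i.isLt]
  rw [this]
  exact Complex.normSq_pos.2 hi

lemma shiftN (m : ℕ) (v : Fin m → ℂ) :
    ∑ i ∈ Finset.range m, Complex.normSq (Vext m v (i + 1))
      = Nsum m v - Complex.normSq (Vext m v 0) := by
  have h1 := Finset.sum_range_succ' (fun i => Complex.normSq (Vext m v i)) m
  have h2 := Finset.sum_range_succ (fun i => Complex.normSq (Vext m v i)) m
  rw [Vext_top m v (le_refl m)] at h2
  simp only [Complex.normSq_zero, add_zero] at h2
  rw [Nsum, ← h2, h1]
  ring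

lemma abs_Ssum_le (m : ℕ) (v : Fin m → ℂ) : ‖Ssum m v‖ ≤ Nsum m v := by
  have h1 : ‖Ssum m v‖
      ≤ ∑ i ∈ Finset.range m, ‖(starRingEnd ℂ) (Vext m v i) * Vext m v (i + 1)‖ := by
    exact norm_sum_le _ _
  have h2 : ∀ i ∈ Finset.range m,
      ‖(starRingEnd ℂ) (Vext m v i) * Vext m v (i + 1)‖
        ≤ (Complex.normSq (Vext m v i) + Complex.normSq (Vext m v (i + 1))) / 2 := by
    intro i _
    rw [norm_mul, Complex.norm_conj]
    have ha := Complex.sq_norm (Vext m v i)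
    have hb := Complex.sq_norm (Vext m v (i + 1))
    nlinarith [sq_nonneg (‖Vext m v i‖ - ‖Vext m v (i + 1)‖)]
  have h3 := Finset.sum_le_sum h2
  have h4 : ∑ i ∈ Finset.range m,
      (Complex.normSq (Vext m v i) + Complex.normSq (Vext m v (i + 1))) / 2
      = Nsum m v - Complex.normSq (Vext m v 0) / 2 := by
    rw [← Finset.sum_div, Finset.sum_add_distrib, shiftN]
    rw [Nsum]
    ring
  rw [h4] at h3
  have := Complex.normSq_nonneg (Vext m v 0)
  linarith [h1.trans h3]

lemma sq_re_im_le (m : ℕ) (v : Fin m → ℂ) :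
    (Ssum m v).re ^ 2 + (Ssum m v).im ^ 2 ≤ Nsum m v ^ 2 := by
  have h1 : (Ssum m v).re ^ 2 + (Ssum m v).im ^ 2 = ‖Ssum m v‖ ^ 2 := by
    rw [Complex.sq_norm, Complex.normSq_apply]; ring
  rw [h1]
  have h2 := abs_Ssum_le m v
  have h3 := norm_nonneg (Ssum m v)
  nlinarith

lemma re_Ssum_lt (m : ℕ) (v : Fin m → ℂ) (hv : v ≠ 0) : (Ssum m v).re < Nsum m v := by
  by_contra hle
  push_neg at hle
  have key : ∑ i ∈ Finset.range m, Complex.normSq (Vext m v i - Vext m v (i + 1))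
      = 2 * Nsum m v - Complex.normSq (Vext m v 0) - 2 * (Ssum m v).re := by
    have hterm : ∀ i ∈ Finset.range m, Complex.normSq (Vext m v i - Vext m v (i + 1))
        = Complex.normSq (Vext m v i) + Complex.normSq (Vext m v (i + 1))
          - 2 * ((starRingEnd ℂ) (Vext m v i) * Vext m v (i + 1)).re := by
      intro i _
      rw [Complex.normSq_sub]
      simp only [Complex.mul_re, Complex.conj_re, Complex.conj_im]
      ring
    rw [Finset.sum_congr rfl hterm, Finset.sum_sub_distrib, Finset.sum_add_distrib, shiftN,
      ← Finset.mul_sum]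
    have : (∑ i ∈ Finset.range m, ((starRingEnd ℂ) (Vext m v i) * Vext m v (i + 1)).re)
        = (Ssum m v).re := by
      rw [Ssum, Complex.re_sum]
    rw [this, Nsum]
    ring
  have hnn : ∀ i ∈ Finset.range m, (0:ℝ) ≤ Complex.normSq (Vext m v i - Vext m v (i + 1)) :=
    fun i _ => Complex.normSq_nonneg _
  have hsum_le : ∑ i ∈ Finset.range m, Complex.normSq (Vext m v i - Vext m v (i + 1)) ≤ 0 := by
    have := Complex.normSq_nonneg (Vext m v 0)
    linarith
  have hsum0 : ∑ i ∈ Finset.range m, Complex.normSq (Vext m v i - Vext m v (i + 1)) = 0 :=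
    le_antisymm hsum_le (Finset.sum_nonneg hnn)
  have heach : ∀ i ∈ Finset.range m, Complex.normSq (Vext m v i - Vext m v (i + 1)) = 0 :=
    (Finset.sum_eq_zero_iff_of_nonneg hnn).1 hsum0
  have h00 : Complex.normSq (Vext m v 0) = 0 := by
    have hkey0 : 2 * Nsum m v - Complex.normSq (Vext m v 0) - 2 * (Ssum m v).re = 0 := by
      rw [← key, hsum0]
    have := Complex.normSq_nonneg (Vext m v 0)
    linarith
  have hV0 : Vext m v 0 = 0 := Complex.normSq_eq_zero.1 h00
  have hstep : ∀ i, i < m → Vext m v i = Vext m v (i + 1) := by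
    intro i hi
    have h0 := Complex.normSq_eq_zero.1 (heach i (Finset.mem_range.2 hi))
    exact sub_eq_zero.1 h0
  have hall : ∀ k, Vext m v k = 0 := by
    intro k
    induction k with
    | zero => exact hV0
    | succ t ih =>
      by_cases ht : t < m
      · rw [← hstep t ht]; exact ih
      · exact Vext_top m v (by omega)
  apply hv
  funext i
  have := hall i.val
  simpa [Vext, i.isLt] using this

lemma quad_re (a b d nn : ℝ) (S : ℂ) :
    ((b:ℂ) * (nn:ℝ) + (d:ℂ) * S + (a:ℂ) * (starRingEnd ℂ) S).re
      = b * nn + (d + a) * S.re := by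
  simp [Complex.add_re, Complex.mul_re, Complex.mul_im, Complex.conj_re, Complex.conj_im,
    Complex.ofReal_re, Complex.ofReal_im]
  ring

lemma quad_im (a b d nn : ℝ) (S : ℂ) :
    ((b:ℂ) * (nn:ℝ) + (d:ℂ) * S + (a:ℂ) * (starRingEnd ℂ) S).im
      = (d - a) * S.im := by
  simp [Complex.add_im, Complex.mul_re, Complex.mul_im, Complex.conj_re, Complex.conj_im,
    Complex.ofReal_re, Complex.ofReal_im]
  ring


lemma numer_pos (c δz y2 n R I w : ℝ) (hδz : δz ≠ 0) (hc : 0 < c) (hw : 0 < w)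
    (hy2 : 2 * c / 3 < y2) (hn : 0 < n) (hRn : R < n) (hnR0 : 0 ≤ n + R)
    (hRI : R ^ 2 + I ^ 2 ≤ n ^ 2) :
    0 < y2 * (n - R) * (w * (10 * n + 2 * R)) + c / δz * I * (-(δz * w) * I) := by
  have h2nd : c / δz * I * (-(δz * w) * I) = -(c * w * I ^ 2) := by
    field_simp
  rw [h2nd]
  have h10 : 0 < 10 * n + 2 * R := by linarith
  have h17 : 0 ≤ 17 * n + R := by linarith
  have t1 : 0 < (y2 - 2 * c / 3) * ((n - R) * (10 * n + 2 * R)) :=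
    mul_pos (by linarith) (mul_pos (by linarith) h10)
  have t2 : 0 ≤ c * ((n - R) * (17 * n + R)) :=
    mul_nonneg hc.le (mul_nonneg (by linarith) h17)
  have t3 : 0 ≤ c * ((n - R) * (n + R) - I ^ 2) := by
    apply mul_nonneg hc.le
    nlinarith [hRI]
  nlinarith [t1, t2, t3, mul_pos hw t1]

lemma QXre_pos {δv δz : ℝ} (hδv : 0 < δv) {m : ℕ} (v : Fin m → ℂ) (hv : v ≠ 0) :
    0 < (star v ⬝ᵥ (triMatC m (fun _ => cc1 δv δz) (fun _ => cc2 δv)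
      (fun _ => cc3 δv δz)).mulVec v).re := by
  rw [tri_quad m (cc1 δv δz) (cc2 δv) (cc3 δv δz) v, quad_re]
  set n := Nsum m v with hn_def
  set R := (Ssum m v).re with hR_def
  set I := (Ssum m v).im with hI_def
  have hn : 0 < n := Nsum_pos m v hv
  have hRI : R ^ 2 + I ^ 2 ≤ n ^ 2 := sq_re_im_le m v
  have hnR0 : 0 ≤ n + R := by nlinarith [sq_nonneg (n + R), sq_nonneg I]
  have hgoal : cc2 δv * n + (cc3 δv δz + cc1 δv δz) * R = (1 / (6 * δv)) * (5 * n + R) := by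
    rw [cc2, cc1, cc3]
    field_simp
    ring
  rw [hgoal]
  have he : 0 < 1 / (6 * δv) := by positivity
  have : 0 < 5 * n + R := by linarith
  exact mul_pos he this

set_option maxHeartbeats 1000000 in
theorem stmt10 (c δv δz : ℝ) (hc : 0 < c) (hδv : 0 < δv) (hδz0 : 0 < δz)
    (hδz2 : δz < 2) (N : ℕ) (hN : 2 ≤ N) :
    IsUnit (X1mat δv δz N).det ∧
    ∀ lam : ℂ, IsEig ((X1mat δv δz N)⁻¹ * Y1mat c δz N) lam → 0 < lam.re := by
  have hδz : δz ≠ 0 := ne_of_gt hδz0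
  have hXdef : X1mat δv δz N = triMatC (N - 1) (fun _ => cc1 δv δz) (fun _ => cc2 δv)
      (fun _ => cc3 δv δz) := rfl
  have hYdef : Y1mat c δz N = triMatC (N - 1) (fun _ => yy1 c δz) (fun _ => yy2 c δz)
      (fun _ => yy3 c δz) := rfl
  have hdet : IsUnit (X1mat δv δz N).det := by
    rw [isUnit_iff_ne_zero]
    intro h0
    obtain ⟨v, hv, hmv⟩ := (Matrix.exists_mulVec_eq_zero_iff).2 h0
    have hQ : star v ⬝ᵥ (X1mat δv δz N).mulVec v = 0 := by
      rw [hmv, dotProduct_zero]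
    have := QXre_pos hδv v hv (δz := δz)
    rw [← hXdef, hQ] at this
    simp at this
  refine ⟨hdet, ?_⟩
  rintro lam ⟨v, hv, heig⟩
  -- relate the two quadratic forms
  have hYv : (Y1mat c δz N).mulVec v = lam • (X1mat δv δz N).mulVec v := by
    have h1 : X1mat δv δz N * ((X1mat δv δz N)⁻¹ * Y1mat c δz N) = Y1mat c δz N :=
      Matrix.mul_nonsing_inv_cancel_left _ _ hdet
    calc (Y1mat c δz N).mulVec v
        = (X1mat δv δz N * ((X1mat δv δz N)⁻¹ * Y1mat c δz N)).mulVec v := by rw [h1]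
      _ = (X1mat δv δz N).mulVec (((X1mat δv δz N)⁻¹ * Y1mat c δz N).mulVec v) :=
          (Matrix.mulVec_mulVec _ _ _).symm
      _ = (X1mat δv δz N).mulVec (lam • v) := by rw [heig]
      _ = lam • (X1mat δv δz N).mulVec v := Matrix.mulVec_smul _ _ _
  set QX := star v ⬝ᵥ (X1mat δv δz N).mulVec v with hQX_def
  set QY := star v ⬝ᵥ (Y1mat c δz N).mulVec v with hQY_def
  have hQYX : QY = lam * QX := by
    rw [hQY_def, hYv, dotProduct_smul, smul_eq_mul, hQX_def]
  -- quadratic form values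
  set n := Nsum (N - 1) v with hn_def
  set R := (Ssum (N - 1) v).re with hR_def
  set I := (Ssum (N - 1) v).im with hI_def
  have hn : 0 < n := Nsum_pos _ v hv
  have hRI : R ^ 2 + I ^ 2 ≤ n ^ 2 := sq_re_im_le _ v
  have hRn : R < n := re_Ssum_lt _ v hv
  have hnR0 : 0 ≤ n + R := by nlinarith [sq_nonneg (n + R), sq_nonneg I]
  have hQXq : QX = (cc2 δv : ℂ) * (n : ℝ) + (cc3 δv δz : ℂ) * Ssum (N-1) v
      + (cc1 δv δz : ℂ) * (starRingEnd ℂ) (Ssum (N-1) v) := by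
    rw [hQX_def, hXdef]; exact tri_quad _ _ _ _ v
  have hQYq : QY = (yy2 c δz : ℂ) * (n : ℝ) + (yy3 c δz : ℂ) * Ssum (N-1) v
      + (yy1 c δz : ℂ) * (starRingEnd ℂ) (Ssum (N-1) v) := by
    rw [hQY_def, hYdef]; exact tri_quad _ _ _ _ v
  have hXre : QX.re = cc2 δv * n + (cc3 δv δz + cc1 δv δz) * R := by
    rw [hQXq, quad_re]
  have hXim : QX.im = (cc3 δv δz - cc1 δv δz) * I := by
    rw [hQXq, quad_im]
  have hYre : QY.re = yy2 c δz * n + (yy3 c δz + yy1 c δz) * R := by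
    rw [hQYq, quad_re]
  have hYim : QY.im = (yy3 c δz - yy1 c δz) * I := by
    rw [hQYq, quad_im]
  -- arithmetic identities
  set w : ℝ := 1 / (12 * δv) with hw_def
  have hw : 0 < w := by positivity
  have hA : cc2 δv * n + (cc3 δv δz + cc1 δv δz) * R = w * (10 * n + 2 * R) := by
    rw [cc2, cc1, cc3, hw_def]; field_simp; ring
  have hB : cc3 δv δz - cc1 δv δz = -(δz * w) := by
    rw [cc1, cc3, hw_def]; field_simp; ring
  have hYs : yy2 c δz * n + (yy3 c δz + yy1 c δz) * R = yy2 c δz * (n - R) := by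
    rw [yy1, yy2, yy3]; field_simp; ring
  have hYd : yy3 c δz - yy1 c δz = c / δz := by
    rw [yy1, yy3]; ring
  have hy2 : 2 * c / 3 < yy2 c δz := by
    rw [yy2, lt_div_iff₀ (by positivity : (0:ℝ) < δz ^ 2)]
    nlinarith [mul_pos hc (mul_pos (show (0:ℝ) < 2 - δz by linarith)
      (show (0:ℝ) < 2 + δz by linarith))]
  -- positivity of the numerator
  have hnum : 0 < QY.re * QX.re + QY.im * QX.im := by
    rw [hXre, hXim, hYre, hYim, hA, hB, hYs, hYd]
    exact numer_pos c δz (yy2 c δz) n R I w hδz hc hw hy2 hn hRn hnR0 hRI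
  -- conclude
  have hXrepos : 0 < QX.re := by
    rw [hQX_def, hXdef]
    exact QXre_pos hδv v hv
  have hQXne : QX ≠ 0 := by
    intro h
    rw [h] at hXrepos
    simp at hXrepos
  have hnsq : 0 < Complex.normSq QX := Complex.normSq_pos.2 hQXne
  have hkey : (QY * (starRingEnd ℂ) QX).re = lam.re * Complex.normSq QX := by
    rw [hQYX, mul_assoc, Complex.mul_conj]
    simp [Complex.mul_re]
  have hexpand : (QY * (starRingEnd ℂ) QX).re = QY.re * QX.re + QY.im * QX.im := by
    rw [Complex.mul_re]
    simp [Complex.conj_re, Complex.conj_im]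
  have hpos : 0 < lam.re * Complex.normSq QX := by
    rw [← hkey, hexpand]; exact hnum
  by_contra hle
  push_neg at hle
  nlinarith [mul_nonneg (neg_nonneg.2 hle) hnsq.le]
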